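/- Let g = 2, M a Klingen parabolic matrix, and N a Siegel parabolic matrix with ε(N) = det(D_N) > 0. Then w(M,N) = 0. -/

import Mathlib

open Matrix Complex

noncomputable section

/-- The space of `2g × 2g` real matrices (symplectic candidates). -/
abbrev SpMat (g : ℕ) := Matrix (Fin g ⊕ Fin g) (Fin g ⊕ Fin g) ℝ

/-- The Siegel upper half plane of genus `g`: symmetric complex matrices with
positive definite imaginary part. -/
def SiegelUHP (g : ℕ) : Set (Matrix (Fin g) (Fin g) ℂ) :=
  {Z | Z.IsSymm ∧ Matrix.PosDef (Matrix.of fun i j => (Z i j).im)}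

/-- Coercion of a real matrix to a complex matrix. -/
def cmat {g : ℕ} (A : Matrix (Fin g) (Fin g) ℝ) : Matrix (Fin g) (Fin g) ℂ :=
  A.map (fun x => (x : ℂ))

/-- The automorphy factor `J(M,Z) = det (C Z + D)`. -/
def Jfac {g : ℕ} (M : SpMat g) (Z : Matrix (Fin g) (Fin g) ℂ) : ℂ :=
  (cmat M.toBlocks₂₁ * Z + cmat M.toBlocks₂₂).det

/-- The action `M⟨Z⟩ = (A Z + B)(C Z + D)⁻¹` on the Siegel upper half plane. -/
def spAct {g : ℕ} (M : SpMat g) (Z : Matrix (Fin g) (Fin g) ℂ) :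
    Matrix (Fin g) (Fin g) ℂ :=
  (cmat M.toBlocks₁₁ * Z + cmat M.toBlocks₁₂) *
    (cmat M.toBlocks₂₁ * Z + cmat M.toBlocks₂₂)⁻¹

/-- The base point `i·E` of the Siegel upper half plane. -/
def iE (g : ℕ) : Matrix (Fin g) (Fin g) ℂ := Complex.I • 1

/-- `L` is a continuous branch of `arg J(M, ·)` on the Siegel upper half plane,
normalized to the principal value at `Z = iE`. -/
def IsArgBranch (g : ℕ) (L : SpMat g → Matrix (Fin g) (Fin g) ℂ → ℝ) : Prop :=
  (∀ M ∈ Matrix.symplecticGroup (Fin g) ℝ, ContinuousOn (L M) (SiegelUHP g)) ∧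
  (∀ M ∈ Matrix.symplecticGroup (Fin g) ℝ, ∀ Z ∈ SiegelUHP g,
      (‖Jfac M Z‖ : ℂ) * Complex.exp (Complex.I * (L M Z)) = Jfac M Z) ∧
  (∀ M ∈ Matrix.symplecticGroup (Fin g) ℝ, L M (iE g) = Complex.arg (Jfac M (iE g)))

/-- The cocycle `w(M,N) = (1/2π)(L(MN,Z) - L(M,NZ) - L(N,Z))`, evaluated at the
base point `Z = iE` (it is independent of `Z`). -/
def wcoc {g : ℕ} (L : SpMat g → Matrix (Fin g) (Fin g) ℂ → ℝ) (M N : SpMat g) : ℝ :=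
  (L (M * N) (iE g) - L M (spAct N (iE g)) - L N (iE g)) / (2 * Real.pi)

/-- Membership in the first Klingen parabolic group of `Sp(2,ℝ)`: rows have the
pattern `(a₁,0,b₁,b₂),(a₃,a₄,b₃,b₄),(c₁,0,d₁,d₂),(0,0,0,d₄)`. -/
def KlingenFirst (M : SpMat 2) : Prop :=
  M (.inl 0) (.inl 1) = 0 ∧ M (.inr 0) (.inl 1) = 0 ∧
  M (.inr 1) (.inl 0) = 0 ∧ M (.inr 1) (.inl 1) = 0 ∧ M (.inr 1) (.inr 0) = 0

/-- Membership in the second Klingen parabolic group of `Sp(2,ℝ)`: rows have the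
pattern `(a₁,a₂,b₁,b₂),(0,a₄,b₃,b₄),(0,0,d₁,0),(0,c₄,d₃,d₄)`. -/
def KlingenSecond (M : SpMat 2) : Prop :=
  M (.inl 1) (.inl 0) = 0 ∧ M (.inr 0) (.inl 0) = 0 ∧
  M (.inr 0) (.inl 1) = 0 ∧ M (.inr 0) (.inr 1) = 0 ∧ M (.inr 1) (.inl 0) = 0

/-! ### Auxiliary lemmas -/

section Helpers

lemma cmat_eq {g : ℕ} (A : Matrix (Fin g) (Fin g) ℝ) :
    cmat A = A.map Complex.ofRealHom := rfl

lemma cmat_mul {g : ℕ} (A B : Matrix (Fin g) (Fin g) ℝ) : cmat (A * B) = cmat A * cmat B := by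
  simp [cmat_eq, Matrix.map_mul]

lemma cmat_add {g : ℕ} (A B : Matrix (Fin g) (Fin g) ℝ) : cmat (A + B) = cmat A + cmat B := by
  simp [cmat_eq, Matrix.map_add]

lemma cmat_one {g : ℕ} : cmat (1 : Matrix (Fin g) (Fin g) ℝ) = 1 := by
  simp [cmat_eq]

lemma cmat_zero {g : ℕ} : cmat (0 : Matrix (Fin g) (Fin g) ℝ) = 0 := by
  simp [cmat_eq]

lemma cmat_transpose {g : ℕ} (A : Matrix (Fin g) (Fin g) ℝ) : cmat Aᵀ = (cmat A)ᵀ := by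
  simp [cmat_eq, Matrix.transpose_map]

lemma cmat_det {g : ℕ} (A : Matrix (Fin g) (Fin g) ℝ) : (cmat A).det = (A.det : ℂ) := by
  rw [cmat_eq]; exact (RingHom.map_det Complex.ofRealHom A).symm

lemma mul_toBlocks₂₁ {g : ℕ} (M N : SpMat g) :
    (M * N).toBlocks₂₁ = M.toBlocks₂₁ * N.toBlocks₁₁ + M.toBlocks₂₂ * N.toBlocks₂₁ := by
  conv_lhs => rw [← Matrix.fromBlocks_toBlocks M, ← Matrix.fromBlocks_toBlocks N,
    Matrix.fromBlocks_multiply]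
  rw [Matrix.toBlocks_fromBlocks₂₁]

lemma mul_toBlocks₂₂ {g : ℕ} (M N : SpMat g) :
    (M * N).toBlocks₂₂ = M.toBlocks₂₁ * N.toBlocks₁₂ + M.toBlocks₂₂ * N.toBlocks₂₂ := by
  conv_lhs => rw [← Matrix.fromBlocks_toBlocks M, ← Matrix.fromBlocks_toBlocks N,
    Matrix.fromBlocks_multiply]
  rw [Matrix.toBlocks_fromBlocks₂₂]

lemma posdef_mul_transpose_self {n : ℕ} (A : Matrix (Fin n) (Fin n) ℝ) (hA : IsUnit A.det) :
    (A * Aᵀ).PosDef := by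
  have h := Matrix.posSemidef_self_mul_conjTranspose A
  rw [Matrix.conjTranspose_eq_transpose_of_trivial] at h
  rw [Matrix.posSemidef_iff_dotProduct_mulVec] at h
  rw [Matrix.posDef_iff_dotProduct_mulVec]
  refine ⟨h.1, fun x hx => lt_of_le_of_ne (h.2 x) fun he => hx ?_⟩
  have key : star x ⬝ᵥ (A * Aᵀ) *ᵥ x = (Aᵀ *ᵥ x) ⬝ᵥ (Aᵀ *ᵥ x) := by
    rw [star_trivial, ← Matrix.mulVec_mulVec, Matrix.dotProduct_mulVec,
      ← Matrix.transpose_transpose A, Matrix.vecMul_transpose, Matrix.transpose_transpose]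
  have h2 : Aᵀ *ᵥ x = 0 := dotProduct_self_eq_zero.mp (by rw [← key, ← he])
  have hinv : Aᵀ.det ≠ 0 := by rwa [Matrix.det_transpose, ← isUnit_iff_ne_zero]
  exact Matrix.eq_zero_of_mulVec_eq_zero hinv h2

lemma posdef_smul_add {g : ℕ} {P Q : Matrix (Fin g) (Fin g) ℝ} (hP : P.PosDef) (hQ : Q.PosDef)
    {a b : ℝ} (ha : 0 ≤ a) (hb : 0 ≤ b) (hab : a + b = 1) : (a • P + b • Q).PosDef := by
  rw [Matrix.posDef_iff_dotProduct_mulVec] at hP hQ ⊢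
  constructor
  · have h1 : Pᴴ = P := hP.1
    have h2 : Qᴴ = Q := hQ.1
    show (a • P + b • Q)ᴴ = _
    rw [Matrix.conjTranspose_add, Matrix.conjTranspose_smul, Matrix.conjTranspose_smul,
      star_trivial, star_trivial, h1, h2]
  · intro x hx
    have e : star x ⬝ᵥ (a • P + b • Q) *ᵥ x
        = a * (star x ⬝ᵥ P *ᵥ x) + b * (star x ⬝ᵥ Q *ᵥ x) := by
      rw [Matrix.add_mulVec, Matrix.smul_mulVec, Matrix.smul_mulVec,
        dotProduct_add, dotProduct_smul, dotProduct_smul]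
      simp [smul_eq_mul]
    rw [e]
    rcases eq_or_lt_of_le ha with h | h
    · have hb1 : b = 1 := by linarith
      rw [← h, hb1]; simpa using hQ.2 hx
    · have : 0 ≤ b * (star x ⬝ᵥ Q *ᵥ x) := mul_nonneg hb (le_of_lt (hQ.2 hx))
      have := mul_pos h (hP.2 hx)
      linarith

lemma im_matrix_convex {g : ℕ} (Z W : Matrix (Fin g) (Fin g) ℂ) (a b : ℝ) :
    (Matrix.of fun i j => ((a • Z + b • W) i j).im)
      = a • (Matrix.of fun i j => (Z i j).im) + b • (Matrix.of fun i j => (W i j).im) := by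
  ext i j
  simp [Matrix.add_apply, Matrix.smul_apply, Complex.add_im, Complex.smul_im]

lemma uhp_convex (g : ℕ) : Convex ℝ (SiegelUHP g) := by
  intro Z hZ W hW a b ha hb hab
  refine ⟨?_, ?_⟩
  · have h1 := hZ.1; have h2 := hW.1
    show (a • Z + b • W)ᵀ = _
    rw [Matrix.transpose_add, Matrix.transpose_smul, Matrix.transpose_smul, h1, h2]
  · rw [im_matrix_convex]
    exact posdef_smul_add hZ.2 hW.2 ha hb hab

lemma uhp_preconnected (g : ℕ) : IsPreconnected (SiegelUHP g) :=
  (uhp_convex g).isPreconnected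

lemma iE_mem (g : ℕ) : iE g ∈ SiegelUHP g := by
  constructor
  · show (Complex.I • (1 : Matrix (Fin g) (Fin g) ℂ))ᵀ = _
    rw [Matrix.transpose_smul, Matrix.transpose_one]; rfl
  · have : (Matrix.of fun i j => ((iE g) i j).im) = (1 : Matrix (Fin g) (Fin g) ℝ) := by
      ext i j
      by_cases h : i = j <;>
        simp [iE, Matrix.smul_apply, Matrix.one_apply, h]
    rw [this]
    exact Matrix.PosDef.one

lemma posdef_diag {g : ℕ} {P : Matrix (Fin g) (Fin g) ℝ} (hP : P.PosDef) (i : Fin g) :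
    0 < P i i := by
  have := hP.dotProduct_mulVec_pos (x := Pi.single i 1) (by
    intro h
    simpa using congrFun h i)
  simpa [Matrix.mulVec_single, dotProduct_single] using this

lemma jfac_continuous {g : ℕ} (M : SpMat g) : Continuous (Jfac M) :=
  ((continuous_const.matrix_mul continuous_id).add continuous_const).matrix_det

lemma siegel_blocks {g : ℕ} {P : SpMat g} (hP : P ∈ Matrix.symplecticGroup (Fin g) ℝ)
    (h21 : P.toBlocks₂₁ = 0) :
    P.toBlocks₁₁ * P.toBlocks₂₂ᵀ = 1 ∧ P.toBlocks₂₂ * P.toBlocks₁₁ᵀ = 1 ∧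
      P.toBlocks₁₂ * P.toBlocks₁₁ᵀ = P.toBlocks₁₁ * P.toBlocks₁₂ᵀ := by
  rw [SymplecticGroup.mem_iff] at hP
  rw [← Matrix.fromBlocks_toBlocks P, h21] at hP
  rw [Matrix.J, Matrix.fromBlocks_multiply, Matrix.fromBlocks_transpose,
    Matrix.fromBlocks_multiply] at hP
  simp only [Matrix.mul_zero, Matrix.zero_mul, Matrix.mul_one, Matrix.mul_neg, Matrix.mul_one,
    add_zero, zero_add, neg_zero, Matrix.transpose_zero,
    Matrix.mul_neg, Matrix.neg_mul] at hP
  have h11 := congrArg Matrix.toBlocks₁₁ hP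
  have h12 := congrArg Matrix.toBlocks₁₂ hP
  have hb21 := congrArg Matrix.toBlocks₂₁ hP
  simp only [Matrix.toBlocks_fromBlocks₁₁, Matrix.toBlocks_fromBlocks₁₂,
    Matrix.toBlocks_fromBlocks₂₁] at h11 h12 hb21
  refine ⟨?_, hb21, ?_⟩
  · have := congrArg Neg.neg h12
    simpa using this
  · linear_combination (norm := module) h11

lemma branch_eq {L : SpMat 2 → Matrix (Fin 2) (Fin 2) ℂ → ℝ} (hL : IsArgBranch 2 L)
    {M : SpMat 2} (hM : M ∈ Matrix.symplecticGroup (Fin 2) ℝ)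
    (hcont : ContinuousOn (fun Z => (Jfac M Z).arg) (SiegelUHP 2))
    (hne : ∀ Z ∈ SiegelUHP 2, Jfac M Z ≠ 0) :
    ∀ Z ∈ SiegelUHP 2, L M Z = (Jfac M Z).arg := by
  set f : Matrix (Fin 2) (Fin 2) ℂ → ℝ := fun Z => L M Z - (Jfac M Z).arg with hf
  have hfc : ContinuousOn f (SiegelUHP 2) := (hL.1 M hM).sub hcont
  have key : ∀ Z ∈ SiegelUHP 2, ∃ n : ℤ, f Z = n * (2 * Real.pi) := by
    intro Z hZ
    have h1 := hL.2.1 M hM Z hZ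
    have h2 := Complex.norm_mul_exp_arg_mul_I (Jfac M Z)
    have habs : (‖Jfac M Z‖ : ℂ) ≠ 0 := by
      simpa using (norm_ne_zero_iff).mpr (hne Z hZ)
    have h3 : Complex.exp (Complex.I * (L M Z)) = Complex.exp (((Jfac M Z).arg : ℂ) * Complex.I) :=
      mul_left_cancel₀ habs (h1.trans h2.symm)
    rw [Complex.exp_eq_exp_iff_exists_int] at h3
    obtain ⟨n, hn⟩ := h3
    refine ⟨n, ?_⟩
    have him := congrArg Complex.im hn
    simp [Complex.add_im, Complex.mul_im, Complex.I_im, Complex.I_re,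
      Complex.ofReal_re, Complex.ofReal_im] at him
    rw [hf]
    simp only
    rw [him]; ring
  have hiE : f (iE 2) = 0 := by
    rw [hf]; simp only; rw [hL.2.2 M hM, sub_self]
  intro Z hZ
  by_contra hzero
  have hfZ : f Z ≠ 0 := sub_ne_zero_of_ne hzero
  obtain ⟨n, hn⟩ := key Z hZ
  have hpre : IsPreconnected (f '' SiegelUHP 2) := (uhp_preconnected 2).image f hfc
  have h0 : (0 : ℝ) ∈ f '' SiegelUHP 2 := ⟨iE 2, iE_mem 2, hiE⟩
  have hv : f Z ∈ f '' SiegelUHP 2 := ⟨Z, hZ, rfl⟩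
  have hpi : Real.pi > 0 := Real.pi_pos
  have hn0 : n ≠ 0 := by
    intro h; rw [h] at hn; simp at hn; exact hfZ hn
  have contra : ∃ m : ℤ, (Real.pi : ℝ) = m * (2 * Real.pi) ∨ (-Real.pi : ℝ) = m * (2 * Real.pi) := by
    rcases lt_or_gt_of_ne hn0 with h | h
    · have hle : f Z ≤ -(2 * Real.pi) := by
        rw [hn]
        have h' : n ≤ -1 := by omega
        have : (n : ℝ) ≤ -1 := by exact_mod_cast h'
        nlinarith
      have hmem : (-Real.pi : ℝ) ∈ Set.Icc (f Z) 0 := ⟨by linarith, by linarith⟩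
      have := hpre.Icc_subset hv h0 hmem
      obtain ⟨W, hW, hfW⟩ := this
      obtain ⟨m, hm⟩ := key W hW
      exact ⟨m, Or.inr (by linarith [hm, hfW])⟩
    · have hge : 2 * Real.pi ≤ f Z := by
        rw [hn]
        have : (1 : ℝ) ≤ (n : ℝ) := by exact_mod_cast h
        nlinarith
      have hmem : (Real.pi : ℝ) ∈ Set.Icc 0 (f Z) := ⟨by linarith, by linarith⟩
      have := hpre.Icc_subset h0 hv hmem
      obtain ⟨W, hW, hfW⟩ := this
      obtain ⟨m, hm⟩ := key W hW
      exact ⟨m, Or.inl (by linarith [hm, hfW])⟩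
  obtain ⟨m, hm | hm⟩ := contra
  · have : (1 : ℝ) = 2 * m := by nlinarith [hm]
    have : (2 * m : ℤ) = 1 := by exact_mod_cast this.symm
    omega
  · have : (-1 : ℝ) = 2 * m := by nlinarith [hm]
    have : (2 * m : ℤ) = -1 := by exact_mod_cast this.symm
    omega

lemma jfac_k1 {M : SpMat 2} (h : KlingenFirst M) (Z : Matrix (Fin 2) (Fin 2) ℂ) :
    Jfac M Z = ((M (.inr 0) (.inl 0) : ℂ) * Z 0 0 + (M (.inr 0) (.inr 0) : ℂ))
      * (M (.inr 1) (.inr 1) : ℂ) := by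
  obtain ⟨h1, h2, h3, h4, h5⟩ := h
  rw [Jfac, Matrix.det_fin_two]
  simp [cmat, Matrix.mul_apply, Matrix.add_apply, Matrix.map_apply, Matrix.toBlocks₂₁,
    Matrix.toBlocks₂₂, Fin.sum_univ_two, h1, h2, h3, h4, h5]

lemma jfac_k2 {M : SpMat 2} (h : KlingenSecond M) (Z : Matrix (Fin 2) (Fin 2) ℂ) :
    Jfac M Z = (M (.inr 0) (.inr 0) : ℂ)
      * ((M (.inr 1) (.inl 1) : ℂ) * Z 1 1 + (M (.inr 1) (.inr 1) : ℂ)) := by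
  obtain ⟨h1, h2, h3, h4, h5⟩ := h
  rw [Jfac, Matrix.det_fin_two]
  simp [cmat, Matrix.mul_apply, Matrix.add_apply, Matrix.map_apply, Matrix.toBlocks₂₁,
    Matrix.toBlocks₂₂, Fin.sum_univ_two, h1, h2, h3, h4, h5]

lemma branch_hyp_of_im {M : SpMat 2} (h : ∀ Z ∈ SiegelUHP 2, (Jfac M Z).im ≠ 0) :
    ContinuousOn (fun Z => (Jfac M Z).arg) (SiegelUHP 2)
      ∧ ∀ Z ∈ SiegelUHP 2, Jfac M Z ≠ 0 := by
  constructor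
  · intro Z hZ
    have hmem : Jfac M Z ∈ Complex.slitPlane := by
      simp only [Complex.mem_slitPlane_iff]
      exact Or.inr (h Z hZ)
    exact ((Complex.continuousAt_arg hmem).comp (jfac_continuous M).continuousAt).continuousWithinAt
  · intro Z hZ hzero
    exact h Z hZ (by rw [hzero]; simp)

lemma branch_hyp_of_const {M : SpMat 2} (r : ℝ) (hr : r ≠ 0) (h : ∀ Z, Jfac M Z = (r : ℂ)) :
    ContinuousOn (fun Z => (Jfac M Z).arg) (SiegelUHP 2)
      ∧ ∀ Z ∈ SiegelUHP 2, Jfac M Z ≠ 0 := by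
  constructor
  · have he : (fun Z : Matrix (Fin 2) (Fin 2) ℂ => (Jfac M Z).arg)
        = fun _ => Complex.arg (r : ℂ) := by
      funext Z; rw [h]
    rw [he]; exact continuousOn_const
  · intro Z _
    rw [h]
    exact_mod_cast hr

lemma im_pos_diag {Z : Matrix (Fin 2) (Fin 2) ℂ} (hZ : Z ∈ SiegelUHP 2) (i : Fin 2) :
    0 < (Z i i).im := posdef_diag hZ.2 i

lemma klingen_branch {L : SpMat 2 → Matrix (Fin 2) (Fin 2) ℂ → ℝ} (hL : IsArgBranch 2 L)
    {M : SpMat 2} (hM : M ∈ Matrix.symplecticGroup (Fin 2) ℝ)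
    (hMK : KlingenFirst M ∨ KlingenSecond M) :
    ∀ Z ∈ SiegelUHP 2, L M Z = (Jfac M Z).arg := by
  have hdet : M.det ≠ 0 := (SymplecticGroup.symplectic_det hM).ne_zero
  rcases hMK with h | h
  · obtain ⟨h1, h2, h3, h4, h5⟩ := h
    have hd4 : M (.inr 1) (.inr 1) ≠ 0 := by
      intro hz
      apply hdet
      apply Matrix.det_eq_zero_of_row_eq_zero (Sum.inr 1)
      intro j
      rcases j with j | j <;> fin_cases j <;> assumption
    by_cases hc : M (.inr 0) (.inl 0) = 0
    · have h21 : M.toBlocks₂₁ = 0 := by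
        ext i j
        fin_cases i <;> fin_cases j <;>
          simpa [Matrix.toBlocks₂₁] using by assumption
      obtain ⟨hAD, -, -⟩ := siegel_blocks hM h21
      have hdetD : M.toBlocks₂₂.det ≠ 0 := by
        have := congrArg Matrix.det hAD
        rw [Matrix.det_mul, Matrix.det_transpose, Matrix.det_one] at this
        exact right_ne_zero_of_mul_eq_one this
      have hDval : M.toBlocks₂₂.det = M (.inr 0) (.inr 0) * M (.inr 1) (.inr 1) := by
        rw [Matrix.det_fin_two]
        simp [Matrix.toBlocks₂₂, h5]
      have hr : M (.inr 0) (.inr 0) * M (.inr 1) (.inr 1) ≠ 0 := hDval ▸ hdetD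
      have hconst : ∀ Z, Jfac M Z = ((M (.inr 0) (.inr 0) * M (.inr 1) (.inr 1) : ℝ) : ℂ) := by
        intro Z
        rw [jfac_k1 ⟨h1, h2, h3, h4, h5⟩ Z, hc]
        push_cast
        ring
      obtain ⟨hcont, hne⟩ := branch_hyp_of_const _ hr hconst
      exact branch_eq hL hM hcont hne
    · have him : ∀ Z ∈ SiegelUHP 2, (Jfac M Z).im ≠ 0 := by
        intro Z hZ
        rw [jfac_k1 ⟨h1, h2, h3, h4, h5⟩ Z]
        have : (((M (.inr 0) (.inl 0) : ℂ) * Z 0 0 + (M (.inr 0) (.inr 0) : ℂ))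
            * (M (.inr 1) (.inr 1) : ℂ)).im
            = M (.inr 0) (.inl 0) * M (.inr 1) (.inr 1) * (Z 0 0).im := by
          simp [Complex.add_im, Complex.mul_im, Complex.ofReal_re, Complex.ofReal_im]
          ring
        rw [this]
        exact mul_ne_zero (mul_ne_zero hc hd4) (ne_of_gt (im_pos_diag hZ 0))
      obtain ⟨hcont, hne⟩ := branch_hyp_of_im him
      exact branch_eq hL hM hcont hne
  · obtain ⟨h1, h2, h3, h4, h5⟩ := h
    have hd1 : M (.inr 0) (.inr 0) ≠ 0 := by
      intro hz
      apply hdet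
      apply Matrix.det_eq_zero_of_row_eq_zero (Sum.inr 0)
      intro j
      rcases j with j | j <;> fin_cases j <;> assumption
    by_cases hc : M (.inr 1) (.inl 1) = 0
    · have h21 : M.toBlocks₂₁ = 0 := by
        ext i j
        fin_cases i <;> fin_cases j <;>
          simpa [Matrix.toBlocks₂₁] using by assumption
      obtain ⟨hAD, -, -⟩ := siegel_blocks hM h21
      have hdetD : M.toBlocks₂₂.det ≠ 0 := by
        have := congrArg Matrix.det hAD
        rw [Matrix.det_mul, Matrix.det_transpose, Matrix.det_one] at this
        exact right_ne_zero_of_mul_eq_one this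
      have hDval : M.toBlocks₂₂.det = M (.inr 0) (.inr 0) * M (.inr 1) (.inr 1) := by
        rw [Matrix.det_fin_two]
        simp [Matrix.toBlocks₂₂, h4]
      have hr : M (.inr 0) (.inr 0) * M (.inr 1) (.inr 1) ≠ 0 := hDval ▸ hdetD
      have hconst : ∀ Z, Jfac M Z = ((M (.inr 0) (.inr 0) * M (.inr 1) (.inr 1) : ℝ) : ℂ) := by
        intro Z
        rw [jfac_k2 ⟨h1, h2, h3, h4, h5⟩ Z, hc]
        push_cast
        ring
      obtain ⟨hcont, hne⟩ := branch_hyp_of_const _ hr hconst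
      exact branch_eq hL hM hcont hne
    · have him : ∀ Z ∈ SiegelUHP 2, (Jfac M Z).im ≠ 0 := by
        intro Z hZ
        rw [jfac_k2 ⟨h1, h2, h3, h4, h5⟩ Z]
        have : ((M (.inr 0) (.inr 0) : ℂ)
            * ((M (.inr 1) (.inl 1) : ℂ) * Z 1 1 + (M (.inr 1) (.inr 1) : ℂ))).im
            = M (.inr 0) (.inr 0) * M (.inr 1) (.inl 1) * (Z 1 1).im := by
          simp [Complex.add_im, Complex.mul_im, Complex.ofReal_re, Complex.ofReal_im]
          ring
        rw [this]
        exact mul_ne_zero (mul_ne_zero hd1 hc) (ne_of_gt (im_pos_diag hZ 1))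
      obtain ⟨hcont, hne⟩ := branch_hyp_of_im him
      exact branch_eq hL hM hcont hne

end Helpers

/-- For `g = 2`, `M` Klingen parabolic and `N` Siegel parabolic with
`ε(N) = det D_N > 0`, one has `w(M,N) = 0`. -/
theorem w_klingen_siegel
    (L : SpMat 2 → Matrix (Fin 2) (Fin 2) ℂ → ℝ) (hL : IsArgBranch 2 L)
    (M : SpMat 2) (hM : M ∈ Matrix.symplecticGroup (Fin 2) ℝ)
    (hMK : KlingenFirst M ∨ KlingenSecond M)
    (N : SpMat 2) (hN : N ∈ Matrix.symplecticGroup (Fin 2) ℝ)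
    (hNpar : N.toBlocks₂₁ = 0) (hNeps : 0 < N.toBlocks₂₂.det) :
    wcoc L M N = 0 := by
  obtain ⟨hAD, hDA, hBA⟩ := siegel_blocks hN hNpar
  set A := N.toBlocks₁₁ with hA
  set B := N.toBlocks₁₂ with hB
  set D := N.toBlocks₂₂ with hD
  have hATD : Aᵀ * D = 1 := mul_eq_one_comm.mp hDA
  have hDinv : (cmat D)⁻¹ = cmat Aᵀ := by
    apply Matrix.inv_eq_right_inv
    rw [← cmat_mul, hDA, cmat_one]
  have hdetA : IsUnit A.det := by
    have := congrArg Matrix.det hAD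
    rw [Matrix.det_mul, Matrix.det_transpose, Matrix.det_one] at this
    exact IsUnit.of_mul_eq_one _ this
  have hZ' : spAct N (iE 2) = Complex.I • cmat (A * Aᵀ) + cmat (B * Aᵀ) := by
    rw [spAct, hNpar, cmat_zero, Matrix.zero_mul, zero_add, hDinv]
    rw [iE, Matrix.mul_smul, Matrix.mul_one, Matrix.add_mul, Matrix.smul_mul,
      ← cmat_mul, ← cmat_mul]
  have hZ'mem : spAct N (iE 2) ∈ SiegelUHP 2 := by
    rw [hZ']
    constructor
    · show (Complex.I • cmat (A * Aᵀ) + cmat (B * Aᵀ))ᵀ = _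
      rw [Matrix.transpose_add, Matrix.transpose_smul, ← cmat_transpose, ← cmat_transpose,
        Matrix.transpose_mul, Matrix.transpose_transpose,
        Matrix.transpose_mul, Matrix.transpose_transpose, hBA]
    · have him : (Matrix.of fun i j =>
          ((Complex.I • cmat (A * Aᵀ) + cmat (B * Aᵀ)) i j).im) = A * Aᵀ := by
        ext i j
        simp [cmat, Matrix.add_apply, Matrix.smul_apply, Matrix.map_apply, Complex.add_im,
          Complex.mul_im, smul_eq_mul]
      rw [him]
      exact posdef_mul_transpose_self A hdetA
  have ca : cmat Aᵀ * cmat D = 1 := by rw [← cmat_mul, hATD, cmat_one]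
  have hmatid : (cmat M.toBlocks₂₁ * spAct N (iE 2) + cmat M.toBlocks₂₂) * cmat D
      = cmat ((M * N).toBlocks₂₁) * iE 2 + cmat ((M * N).toBlocks₂₂) := by
    rw [hZ', mul_toBlocks₂₁, mul_toBlocks₂₂, hNpar, Matrix.mul_zero, add_zero]
    simp only [cmat_mul, cmat_add, iE, Matrix.mul_smul, Matrix.smul_mul, Matrix.mul_one,
      Matrix.add_mul, Matrix.mul_add, Matrix.mul_assoc, ca]
    abel
  have hJr : Jfac (M * N) (iE 2) = ((D.det : ℝ) : ℂ) * Jfac M (spAct N (iE 2)) := by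
    rw [Jfac, ← hmatid, Matrix.det_mul, cmat_det]
    rw [Jfac, mul_comm]
  have hLN : L N (iE 2) = 0 := by
    have h := hL.2.2 N hN
    have hj : Jfac N (iE 2) = ((D.det : ℝ) : ℂ) := by
      rw [Jfac, hNpar, cmat_zero, Matrix.zero_mul, zero_add, cmat_det]
    rw [h, hj]
    exact Complex.arg_ofReal_of_nonneg hNeps.le
  have hLMN : L (M * N) (iE 2) = (Jfac (M * N) (iE 2)).arg := hL.2.2 (M * N) (mul_mem hM hN)
  have hLM : L M (spAct N (iE 2)) = (Jfac M (spAct N (iE 2))).arg :=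
    klingen_branch hL hM hMK _ hZ'mem
  have hargs : (Jfac (M * N) (iE 2)).arg = (Jfac M (spAct N (iE 2))).arg := by
    rw [hJr]
    exact Complex.arg_real_mul _ hNeps
  rw [wcoc, hLMN, hLM, hLN, hargs]
  ring
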